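/- Euclidean angle comparison (Lemma 2.2, κ = 0): let x, y, z be three distinct points in the Euclidean plane with ‖x - y‖ ≤ ‖y - z‖, and let x', y', z' be points with ‖x - y‖ = ‖x' - y'‖, ‖y - z‖ = ‖y' - z'‖, and ‖z - x‖ ≤ ‖z' - x'‖. Then the angle ∠y'x'z' at x' is at most the angle ∠yxz at x. -/
import Mathlib


open EuclideanGeometry

theorem stmt_5 (x y z x' y' z' : EuclideanSpace ℝ (Fin 2))
    (hxy : x ≠ y) (hyz : y ≠ z) (hxz : x ≠ z)
    (hle : ‖x - y‖ ≤ ‖y - z‖)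
    (h1 : ‖x - y‖ = ‖x' - y'‖) (h2 : ‖y - z‖ = ‖y' - z'‖) (h3 : ‖z - x‖ ≤ ‖z' - x'‖) :
    ∠ y' x' z' ≤ ∠ y x z := by
  have d1 : dist x y = dist x' y' := by simpa [dist_eq_norm] using h1
  have d2 : dist y z = dist y' z' := by simpa [dist_eq_norm] using h2
  have d3 : dist z x ≤ dist z' x' := by simpa [dist_eq_norm] using h3
  have ha : (0:ℝ) < dist x y := dist_pos.2 hxy
  have hb : (0:ℝ) < dist z x := dist_pos.2 hxz.symm
  have hb' : (0:ℝ) < dist z' x' := lt_of_lt_of_le hb d3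
  have hac : dist x y ≤ dist y z := by simpa [dist_eq_norm] using hle
  have law1 := EuclideanGeometry.law_cos y x z
  have law2 := EuclideanGeometry.law_cos y' x' z'
  rw [dist_comm y x] at law1
  rw [dist_comm y' x'] at law2
  rw [← d1, ← d2] at law2
  have key : Real.cos (∠ y x z) ≤ Real.cos (∠ y' x' z') := by
    have fact : 0 ≤ (dist z' x' - dist z x) *
        (dist y z * dist y z - dist x y * dist x y + dist z x * dist z' x') := by
      apply mul_nonneg (by linarith)
      nlinarith [mul_pos hb hb']
    nlinarith [fact, mul_pos (mul_pos ha hb) hb']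
  by_contra hcon
  push_neg at hcon
  have := Real.strictAntiOn_cos ⟨angle_nonneg y x z, angle_le_pi y x z⟩
    ⟨angle_nonneg y' x' z', angle_le_pi y' x' z'⟩ hcon
  linarith
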